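/- arXiv:2211.11445 — 2 statements merged into one kernel-verified Lean document; each statement's English description precedes it below -/
import Mathlib

section
/- Let l ≥ 1, let z be an integer with 0 ≤ z < 2^(l+1), let ρ be any nonnegative integer, and let w = z + ρ. Then the pair (w mod 2^l, ρ mod 2^l) does not determine the l-th bit of z: there exist z₁, z₂ with 0 ≤ z₁, z₂ < 2^(l+1) and ρ₁, ρ₂ ≥ 0 such that (z₁ + ρ₁) mod 2^l = (z₂ + ρ₂) mod 2^l, ρ₁ mod 2^l = ρ₂ mod 2^l, but the l-th bit of z₁ is 0 and the l-th bit of z₂ is 1. -/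
/-- The pair (w mod 2^l, ρ mod 2^l) with w = z + ρ does not determine the l-th bit of z. -/
theorem stmt_0 (l : ℕ) (hl : 1 ≤ l) :
    ∃ z₁ z₂ ρ₁ ρ₂ : ℕ,
      z₁ < 2 ^ (l + 1) ∧ z₂ < 2 ^ (l + 1) ∧
      (z₁ + ρ₁) % 2 ^ l = (z₂ + ρ₂) % 2 ^ l ∧
      ρ₁ % 2 ^ l = ρ₂ % 2 ^ l ∧
      z₁ / 2 ^ l % 2 = 0 ∧ z₂ / 2 ^ l % 2 = 1 := by
  refine ⟨0, 2 ^ l, 0, 0, by positivity, ?_, by simp, rfl, by simp, by simp⟩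
  exact pow_lt_pow_right₀ one_lt_two (Nat.lt_succ_self l)
end

section
/- Let l ≥ 1, d_a, d_b integers with 0 ≤ d_a, d_b < 2^l, z = 2^l + d_a − d_b, and ρ a nonnegative integer, w = z + ρ. Then (w − ρ) determines the comparison: d_a ≥ d_b if and only if w − ρ ≥ 2^l; but there exist d_a, d_b, d_a', d_b' and ρ, ρ' with (z+ρ) mod 2^l = (z'+ρ') mod 2^l and ρ mod 2^l = ρ' mod 2^l while d_a ≥ d_b and d_a' < d_b'. -/
/-- w - ρ determines the comparison, but the residues mod 2^l do not. -/
theorem stmt_12 (l : ℕ) (hl : 1 ≤ l) :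
    (∀ dA dB ρ : ℤ, 0 ≤ dA → dA < 2 ^ l → 0 ≤ dB → dB < 2 ^ l → 0 ≤ ρ →
      (dB ≤ dA ↔ 2 ^ l ≤ ((2 ^ l + dA - dB) + ρ) - ρ)) ∧
    (∃ dA dB dA' dB' ρ ρ' : ℤ,
      0 ≤ dA ∧ dA < 2 ^ l ∧ 0 ≤ dB ∧ dB < 2 ^ l ∧
      0 ≤ dA' ∧ dA' < 2 ^ l ∧ 0 ≤ dB' ∧ dB' < 2 ^ l ∧
      0 ≤ ρ ∧ 0 ≤ ρ' ∧
      ((2 ^ l + dA - dB) + ρ) % 2 ^ l = ((2 ^ l + dA' - dB') + ρ') % 2 ^ l ∧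
      ρ % 2 ^ l = ρ' % 2 ^ l ∧
      dB ≤ dA ∧ dA' < dB') := by
  have h2 : (1 : ℤ) < 2 ^ l := by
    calc (1:ℤ) < 2 ^ 1 := by norm_num
    _ ≤ 2 ^ l := pow_le_pow_right₀ (by norm_num) hl
  constructor
  · intro dA dB ρ _ _ _ _ _
    constructor <;> intro h <;> omega
  · refine ⟨1, 0, 0, 2 ^ l - 1, 0, 0, by norm_num, by omega, le_refl _, by omega,
      le_refl _, by omega, by omega, by omega, le_refl _, le_refl _, ?_, rfl, by norm_num, by omega⟩
    have e1 : ((2:ℤ) ^ l + 1 - 0 + 0) = 1 + 2 ^ l * 1 := by ring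
    have e2 : ((2:ℤ) ^ l + 0 - (2 ^ l - 1) + 0) = 1 := by ring
    rw [e1, e2, Int.add_mul_emod_self_left]
end
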